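/- Let p be an odd prime and D the dihedral group of order 2p acting on a ℤ_p-module U, with G = ⟨τ⟩ cyclic of order p. Assume tor(U) = tor(U^G) (the torsion of U is fixed by G). Write Ū = U/tor(U), Ū_F = U^G/tor(U^G). Then the map φ : I_G U ∩ U^G → Ū^G/Ū_F defined by φ(u^{1-τ}) = class of u is a well-defined group isomorphism. -/

import Mathlib

/-- Fixed-point submodule of a linear automorphism. -/
def fixL (p : ℕ) [Fact p.Prime] (U : Type*) [AddCommGroup U] [Module ℤ_[p] U]
    (f : U ≃ₗ[ℤ_[p]] U) : Submodule ℤ_[p] U where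
  carrier := {m | f m = m}
  zero_mem' := by simp
  add_mem' := by
    intro a b ha hb
    simp only [Set.mem_setOf_eq, map_add] at *
    rw [ha, hb]
  smul_mem' := by
    intro c m hm
    simp only [Set.mem_setOf_eq, map_smul] at *
    rw [hm]

/-- The automorphism of `Ū = U/tor(U)` induced by a linear automorphism of `U`
(automorphisms preserve the torsion submodule). -/
noncomputable def qmap (p : ℕ) [Fact p.Prime] (U : Type*) [AddCommGroup U]
    [Module ℤ_[p] U] (f : U ≃ₗ[ℤ_[p]] U) :
    (U ⧸ Submodule.torsion ℤ_[p] U) →ₗ[ℤ_[p]] (U ⧸ Submodule.torsion ℤ_[p] U) :=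
  Submodule.mapQ _ _ f.toLinearMap (by
    intro u hu
    obtain ⟨c, hc⟩ := hu
    exact Submodule.mem_comap.2 ⟨c, by
      show (c : ℤ_[p]) • (f u : U) = 0
      rw [← map_smul f (c : ℤ_[p]) u, show (c : ℤ_[p]) • u = 0 from hc, map_zero]⟩)

/-- `Ū^G`: the fixed points of the induced action of `τ` on `Ū = U/tor(U)`. -/
noncomputable def UGbar (p : ℕ) [Fact p.Prime] (U : Type*) [AddCommGroup U]
    [Module ℤ_[p] U] (τ : U ≃ₗ[ℤ_[p]] U) : Submodule ℤ_[p] (U ⧸ Submodule.torsion ℤ_[p] U) :=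
  LinearMap.eqLocus (qmap p U τ) LinearMap.id

/-- `Ū_F`: the image of `U_F = U^G` in `Ū = U/tor(U)`. -/
noncomputable def UFbar (p : ℕ) [Fact p.Prime] (U : Type*) [AddCommGroup U]
    [Module ℤ_[p] U] (τ : U ≃ₗ[ℤ_[p]] U) : Submodule ℤ_[p] (U ⧸ Submodule.torsion ℤ_[p] U) :=
  (fixL p U τ).map (Submodule.torsion ℤ_[p] U).mkQ

/-- Let `p` be an odd prime, `D = ⟨τ,σ⟩` dihedral of order `2p` acting on a `ℤ_p`-module
`U`, `G = ⟨τ⟩`.  Assume `tor(U) = tor(U^G)`, i.e. every torsion element of `U` is fixed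
by `G`.  Then the map `φ : I_G U ∩ U^G → Ū^G/Ū_F`, `φ(u^{1-τ}) = class of u`, is a
well-defined group isomorphism. -/
theorem stmt_11 (p : ℕ) [Fact p.Prime] (hp : Odd p)
    (U : Type*) [AddCommGroup U] [Module ℤ_[p] U]
    (τ σ : U ≃ₗ[ℤ_[p]] U) (hτ : τ ^ p = 1) (hσ : σ ^ 2 = 1) (hc : σ * τ * σ = τ⁻¹)
    (htor : Submodule.torsion ℤ_[p] U ≤ fixL p U τ) :
    ∃ φ : ↥(LinearMap.range (LinearMap.id - τ.toLinearMap) ⊓ fixL p U τ) ≃+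
        (↥(UGbar p U τ) ⧸ (UFbar p U τ).comap (UGbar p U τ).subtype),
      ∀ (u : U)
        (h : u - τ u ∈ LinearMap.range (LinearMap.id - τ.toLinearMap) ⊓ fixL p U τ)
        (h2 : (Submodule.torsion ℤ_[p] U).mkQ u ∈ UGbar p U τ),
        φ ⟨u - τ u, h⟩ = Submodule.Quotient.mk
          (⟨(Submodule.torsion ℤ_[p] U).mkQ u, h2⟩ : ↥(UGbar p U τ)) := by
  classical
  set T := Submodule.torsion ℤ_[p] U with hT
  set S := LinearMap.range (LinearMap.id - τ.toLinearMap) ⊓ fixL p U τ with hS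
  have hG0tor : T ≤ LinearMap.ker (LinearMap.id - τ.toLinearMap : U →ₗ[ℤ_[p]] U) := by
    intro x hx
    have hfix : τ x = x := htor hx
    simp [LinearMap.mem_ker, LinearMap.sub_apply, hfix]
  let Gbar : (U ⧸ T) →ₗ[ℤ_[p]] U := T.liftQ _ hG0tor
  have hGbar : ∀ u : U, Gbar (T.mkQ u) = u - τ u := fun u => rfl
  have hqmap : ∀ u : U, qmap p U τ (T.mkQ u) = T.mkQ (τ u) := by
    intro u
    simp [qmap, Submodule.mapQ_apply]
  have key : ∀ u : U, τ (u - τ u) = u - τ u → (u - τ u) ∈ T := by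
    intro u hfix
    have hτfix : ∀ m : ℕ, (τ ^ m) (u - τ u) = u - τ u := by
      intro m
      induction m with
      | zero => simp
      | succ n ih2 =>
        rw [pow_succ]
        show (τ ^ n) (τ (u - τ u)) = u - τ u
        rw [hfix, ih2]
    have hiter : ∀ k : ℕ, u - (τ ^ k) u = k • (u - τ u) := by
      intro k
      induction k with
      | zero => simp
      | succ n ih =>
        have hmul : (τ ^ (n+1)) u = (τ ^ n) (τ u) := by rw [pow_succ]; rfl
        have hstep : u - (τ ^ (n+1)) u = (u - (τ ^ n) u) + (τ ^ n) (u - τ u) := by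
          rw [hmul, map_sub]
          abel
        rw [hstep, ih, hτfix, succ_nsmul]
    have hp0 : p • (u - τ u) = 0 := by
      have h := (hiter p).symm
      rw [hτ] at h
      simpa using h
    have hps : ((p : ℤ_[p]) • (u - τ u) : U) = 0 := by
      rw [Nat.cast_smul_eq_nsmul]; exact hp0
    refine ⟨⟨(p : ℤ_[p]), mem_nonZeroDivisors_of_ne_zero ?_⟩, hps⟩
    exact_mod_cast (Nat.cast_ne_zero (R := ℤ_[p])).2 (Fact.out : p.Prime).ne_zero
  have hmem : ∀ v : ↥(UGbar p U τ), Gbar v.1 ∈ S := by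
    rintro ⟨v, hv⟩
    obtain ⟨u, rfl⟩ := T.mkQ_surjective v
    have hvfix : qmap p U τ (T.mkQ u) = T.mkQ u := hv
    rw [hqmap] at hvfix
    have htormem : u - τ u ∈ T := by
      have h1 := (Submodule.Quotient.eq T).1 hvfix.symm
      have h2 := Submodule.neg_mem T h1
      rwa [neg_sub] at h2
    refine ⟨⟨u, rfl⟩, ?_⟩
    show τ (Gbar (T.mkQ u)) = Gbar (T.mkQ u)
    rw [hGbar]
    exact htor htormem
  let g : ↥(UGbar p U τ) →ₗ[ℤ_[p]] ↥S :=
    LinearMap.codRestrict S (Gbar.comp (UGbar p U τ).subtype) hmem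
  have hg : ∀ v : ↥(UGbar p U τ), (g v : U) = Gbar v.1 := fun v => rfl
  have hker : LinearMap.ker g = (UFbar p U τ).comap (UGbar p U τ).subtype := by
    ext ⟨v, hv⟩
    obtain ⟨u, rfl⟩ := T.mkQ_surjective v
    constructor
    · intro hk
      have h0 : u - τ u = 0 := by
        have h1 := congrArg (Subtype.val) ((LinearMap.mem_ker).1 hk)
        rw [← hGbar u]
        simpa [hg] using h1
      have hu : u ∈ fixL p U τ := by
        show τ u = u
        exact (sub_eq_zero.1 h0).symm
      exact Submodule.mem_comap.2 ⟨u, hu, rfl⟩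
    · rintro hm
      obtain ⟨w, hw, hwq⟩ := Submodule.mem_comap.1 hm
      apply (LinearMap.mem_ker).2
      apply Subtype.ext
      show Gbar (T.mkQ u) = 0
      rw [show T.mkQ u = T.mkQ w from hwq.symm, hGbar]
      have hwfix : τ w = w := hw
      rw [hwfix, sub_self]
  have hsurj : Function.Surjective g := by
    rintro ⟨x, ⟨⟨u, hu⟩, hfixx⟩⟩
    have hux : u - τ u = x := by simpa [LinearMap.sub_apply] using hu
    have hxfix : τ (u - τ u) = u - τ u := by rw [hux]; exact hfixx
    have htormem : u - τ u ∈ T := key u hxfix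
    have hUG : T.mkQ u ∈ UGbar p U τ := by
      show qmap p U τ (T.mkQ u) = T.mkQ u
      rw [hqmap]
      have h2 := Submodule.neg_mem T htormem
      rw [neg_sub] at h2
      exact (Submodule.Quotient.eq T).2 h2
    refine ⟨⟨T.mkQ u, hUG⟩, ?_⟩
    apply Subtype.ext
    show Gbar (T.mkQ u) = x
    rw [hGbar, hux]
  let e := LinearMap.quotKerEquivOfSurjective g hsurj
  let q := Submodule.quotEquivOfEq _ _ hker
  refine ⟨(e.symm.trans q).toAddEquiv, ?_⟩
  intro u h h2
  have hgval : g ⟨T.mkQ u, h2⟩ = ⟨u - τ u, h⟩ := by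
    apply Subtype.ext
    show Gbar (T.mkQ u) = u - τ u
    exact hGbar u
  have hfwd : e (Submodule.Quotient.mk ⟨T.mkQ u, h2⟩) = ⟨u - τ u, h⟩ := by
    rw [← hgval]
    rfl
  have hsymm : e.symm ⟨u - τ u, h⟩ = Submodule.Quotient.mk ⟨T.mkQ u, h2⟩ := by
    rw [LinearEquiv.symm_apply_eq, hfwd]
  show q (e.symm ⟨u - τ u, h⟩) = _
  rw [hsymm]
  exact Submodule.quotEquivOfEq_mk _ _ hker _
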